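/- Multilevel Monte Carlo complexity theorem: suppose there exist independent unbiased level estimators Ŷ_l with E[Ŷ_0] = E[P̂_0], E[Ŷ_l] = E[P̂_l − P̂_{l−1}] for l > 0, weak error bound |E[P̂_l − P]| ≤ c_1 h_l^α with α ≥ 1/2, variance bound V[Ŷ_l] ≤ c_2 h_l^β / N_l, and cost bound C_l ≤ c_3 N_l / h_l, where h_l = 2^{−l} T. Then there exists c_4 such that for every ε < e^{−1} one can choose L and N_0,...,N_L so that the combined estimator Ŷ = Σ_l Ŷ_l has mean-square error E[(Ŷ − E[P])²] < ε², with total cost C ≤ c_4 ε^{−2} if β > 1, C ≤ c_4 ε^{−2}(log ε)² if β = 1, and C ≤ c_4 ε^{−2−(1−β)/α} if 0 < β < 1. -/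

import Mathlib

open MeasureTheory Finset ProbabilityTheory

lemma mlmc_msq {Ω : Type*} [MeasurableSpace Ω] (μ : Measure Ω) [IsProbabilityMeasure μ]
    (X : Ω → ℝ) (hX : MemLp X 2 μ) (m : ℝ) :
    ∫ ω, (X ω - m) ^ 2 ∂μ = variance X μ + ((∫ ω, X ω ∂μ) - m) ^ 2 := by
  have hXi : Integrable X μ := hX.integrable one_le_two
  have hX2 : Integrable (fun ω => X ω ^ 2) μ := hX.integrable_sq
  rw [variance_eq_sub hX]
  have e : ∀ ω, (X ω - m) ^ 2 = X ω ^ 2 - (2 * m) * X ω + m ^ 2 := fun ω => by ring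
  simp_rw [e]
  have hsub : Integrable (fun ω => X ω ^ 2 - 2 * m * X ω) μ := hX2.sub (hXi.const_mul _)
  rw [integral_add hsub (integrable_const _),
    integral_sub hX2 (hXi.const_mul _), integral_const_mul, integral_const,
    probReal_univ, smul_eq_mul, one_mul]
  simp only [Pi.pow_apply]
  ring

lemma mlmc_geom {x : ℝ} (h0 : 0 ≤ x) (h1 : x < 1) (n : ℕ) :
    ∑ i ∈ range n, x ^ i ≤ 1 / (1 - x) := by
  have h := geom_sum_mul x n
  have hx : (0:ℝ) ≤ x ^ n := pow_nonneg h0 n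
  rw [le_div_iff₀ (by linarith)]
  nlinarith

lemma mlmc_rpow_split (T t : ℝ) (hT : 0 ≤ T) (l : ℕ) :
    ((2:ℝ) ^ (-(l:ℝ)) * T) ^ t = ((2:ℝ) ^ (-t)) ^ l * T ^ t := by
  rw [Real.mul_rpow (Real.rpow_nonneg (by norm_num) _) hT,
    ← Real.rpow_natCast ((2:ℝ) ^ (-t)) l, ← Real.rpow_mul (by norm_num),
    ← Real.rpow_mul (by norm_num)]
  ring_nf


set_option maxHeartbeats 1000000 in
/-- Multilevel Monte Carlo complexity theorem (Giles).  `Y l N` is the level-`l`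
estimator based on `N` samples, `Cost l N` its computational cost, `Phat l` the
level-`l` payoff approximation and `P` the true payoff.  Under the unbiasedness,
weak-error, variance and cost hypotheses, for every accuracy `ε < e⁻¹` one can
choose the number of levels `L` and the sample sizes `N_l` so that the combined
estimator has mean-square error below `ε²` at the stated cost. -/
theorem mlmc_complexity
    {Ω : Type*} [MeasurableSpace Ω] (μ : Measure Ω) [IsProbabilityMeasure μ]
    (T : ℝ) (hT : 0 < T)
    (P : Ω → ℝ) (Phat : ℕ → Ω → ℝ)
    (Y : ℕ → ℕ → Ω → ℝ) (Cost : ℕ → ℕ → ℝ)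
    (h : ℕ → ℝ) (hdef : ∀ l, h l = 2 ^ (-(l : ℝ)) * T)
    (α β c₁ c₂ c₃ : ℝ)
    (hα : (1 : ℝ) / 2 ≤ α) (hβ : 0 < β)
    (hc₁ : 0 < c₁) (hc₂ : 0 < c₂) (hc₃ : 0 < c₃)
    (hPint : Integrable P μ)
    (hPhatint : ∀ l, Integrable (Phat l) μ)
    (hYmeas : ∀ l N, Measurable (Y l N))
    (hYL2 : ∀ l N, MemLp (Y l N) 2 μ)
    -- independence of the level estimators, for any choice of sample sizes
    (hindep : ∀ N : ℕ → ℕ, iIndepFun (fun l => Y l (N l)) μ)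
    -- (i) unbiasedness
    (hbias0 : ∀ N, 1 ≤ N → ∫ ω, Y 0 N ω ∂μ = ∫ ω, Phat 0 ω ∂μ)
    (hbias : ∀ l N, 1 ≤ l → 1 ≤ N →
      ∫ ω, Y l N ω ∂μ = ∫ ω, (Phat l ω - Phat (l - 1) ω) ∂μ)
    -- (ii) weak convergence
    (hweak : ∀ l, |∫ ω, Phat l ω ∂μ - ∫ ω, P ω ∂μ| ≤ c₁ * h l ^ α)
    -- (iii) variance bound
    (hvar : ∀ l N, 1 ≤ N → variance (Y l N) μ ≤ c₂ * h l ^ β / N)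
    -- (iv) cost bound
    (hcost : ∀ l N, Cost l N ≤ c₃ * N / h l) :
    ∃ c₄ : ℝ, 0 < c₄ ∧ ∀ ε : ℝ, 0 < ε → ε < Real.exp (-1) →
      ∃ (L : ℕ) (N : ℕ → ℕ), (∀ l ≤ L, 1 ≤ N l) ∧
        (∫ ω, (∑ l ∈ Finset.range (L + 1), Y l (N l) ω - ∫ ω', P ω' ∂μ) ^ 2 ∂μ < ε ^ 2) ∧
        (∑ l ∈ Finset.range (L + 1), Cost l (N l)) ≤
          (if 1 < β then c₄ * ε ^ (-2 : ℝ)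
           else if β = 1 then c₄ * ε ^ (-2 : ℝ) * Real.log ε ^ 2
           else c₄ * ε ^ (-2 - (1 - β) / α)) := by
  have hα0 : 0 < α := lt_of_lt_of_le (by norm_num) hα
  have hlog2 : 0 < Real.log 2 := Real.log_pos one_lt_two
  have hTα : (0:ℝ) < T ^ α := Real.rpow_pos_of_pos hT _
  have hh : ∀ l, 0 < h l := fun l => by
    rw [hdef]; exact mul_pos (Real.rpow_pos_of_pos two_pos _) hT
  -- constants
  set K₀ : ℝ := 2 * (2 * c₁ * T ^ α) ^ (1/α) + 1 with hK₀def
  have hK₀1 : 1 ≤ K₀ := by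
    have : (0:ℝ) < (2 * c₁ * T ^ α) ^ (1/α) := Real.rpow_pos_of_pos (by positivity) _
    simp only [hK₀def]; linarith
  have hK₀0 : 0 < K₀ := lt_of_lt_of_le one_pos hK₀1
  set B : ℝ := Real.log (2 * c₁ * T ^ α) with hBdef
  set K₁ : ℝ := (max B 0 + 1) / (α * Real.log 2) + 2 with hK₁def
  have hK₁0 : 0 < K₁ := by positivity
  set q : ℝ := (2:ℝ) ^ (-((β - 1)/2)) with hqdef
  have hq0 : 0 < q := Real.rpow_pos_of_pos two_pos _
  set Sgt : ℝ := T ^ ((β-1)/2) / (1 - q) with hSgtdef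
  set Slt : ℝ := T ^ ((β-1)/2) * (q * K₀ ^ ((1-β)/2) / (q - 1)) with hSltdef
  set Cgt : ℝ := 4 * c₂ * c₃ * Sgt ^ 2 + 2 * c₃ * K₀ / T with hCgtdef
  set Ceq : ℝ := 4 * c₂ * c₃ * K₁ ^ 2 + 2 * c₃ * K₀ / T with hCeqdef
  set Clt : ℝ := 4 * c₂ * c₃ * Slt ^ 2 + 2 * c₃ * K₀ / T with hCltdef
  set c₄ : ℝ := max 1 Cgt + max 1 Ceq + max 1 Clt with hc₄def
  have hc₄0 : 0 < c₄ := by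
    have h1 : (1:ℝ) ≤ max 1 Cgt := le_max_left _ _
    have h2 : (1:ℝ) ≤ max 1 Ceq := le_max_left _ _
    have h3 : (1:ℝ) ≤ max 1 Clt := le_max_left _ _
    simp only [hc₄def]; linarith
  refine ⟨c₄, hc₄0, ?_⟩
  intro ε hε hεe
  have hε1 : ε < 1 := lt_trans hεe (by
    have := Real.exp_lt_one_iff.mpr (by norm_num : (-1:ℝ) < 0); exact this)
  have hlogε : Real.log ε < -1 := by
    have := Real.log_lt_log hε hεe
    rwa [Real.log_exp] at this
  set m : ℝ := ∫ ω', P ω' ∂μ with hmdef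
  set A : ℝ := Real.log (2 * c₁ * T ^ α / ε) / (α * Real.log 2) with hAdef
  set L : ℕ := ⌈A⌉₊ with hLdef
  set S : ℝ := ∑ l ∈ range (L + 1), h l ^ ((β - 1)/2) with hSdef
  have hS0 : 0 < S := by
    refine Finset.sum_pos (fun l _ => Real.rpow_pos_of_pos (hh l) _) ?_
    exact nonempty_range_iff.mpr (Nat.succ_ne_zero L)
  set N : ℕ → ℕ := fun l => ⌈4 * c₂ * S * h l ^ ((β + 1)/2) / ε ^ 2⌉₊ with hNdef
  have hDpos : ∀ l, 0 < 4 * c₂ * S * h l ^ ((β + 1)/2) / ε ^ 2 := fun l => by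
    have := Real.rpow_pos_of_pos (hh l) ((β + 1)/2); positivity
  have hN1 : ∀ l, 1 ≤ N l := fun l => Nat.one_le_iff_ne_zero.mpr
    (Nat.pos_iff_ne_zero.mp (Nat.ceil_pos.mpr (hDpos l)))
  have hNge : ∀ l, 4 * c₂ * S * h l ^ ((β + 1)/2) / ε ^ 2 ≤ (N l : ℝ) :=
    fun l => Nat.le_ceil _
  have hNle : ∀ l, (N l : ℝ) ≤ 4 * c₂ * S * h l ^ ((β + 1)/2) / ε ^ 2 + 1 :=
    fun l => le_of_lt (Nat.ceil_lt_add_one (hDpos l).le)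
  -- bias bound
  have hx : (0:ℝ) < 2 * c₁ * T ^ α / ε := by positivity
  have hAL : A ≤ (L:ℝ) := Nat.le_ceil A
  have hexp : 2 * c₁ * T ^ α / ε ≤ (2:ℝ) ^ ((L:ℝ) * α) := by
    have e1 : (2:ℝ) ^ ((L:ℝ) * α) = Real.exp ((L:ℝ) * α * Real.log 2) := by
      rw [Real.rpow_def_of_pos two_pos]; ring_nf
    have e2 : 2 * c₁ * T ^ α / ε = Real.exp (A * (α * Real.log 2)) := by
      rw [hAdef, div_mul_cancel₀ _ (by positivity : α * Real.log 2 ≠ 0), Real.exp_log hx]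
    rw [e1, e2]
    apply Real.exp_le_exp.mpr
    have := mul_le_mul_of_nonneg_right hAL (le_of_lt (mul_pos hα0 hlog2))
    nlinarith
  have hbiasL : c₁ * h L ^ α ≤ ε / 2 := by
    have hP : (0:ℝ) < (2:ℝ) ^ ((L:ℝ) * α) := Real.rpow_pos_of_pos two_pos _
    have hhL : h L ^ α = T ^ α / (2:ℝ) ^ ((L:ℝ) * α) := by
      rw [hdef, Real.mul_rpow (Real.rpow_nonneg (by norm_num) _) hT.le,
        ← Real.rpow_mul (by norm_num : (0:ℝ) ≤ 2), neg_mul,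
        Real.rpow_neg (by norm_num : (0:ℝ) ≤ 2)]
      ring
    have h' : 2 * c₁ * T ^ α ≤ ε * (2:ℝ) ^ ((L:ℝ) * α) := by
      have h'' := mul_le_mul_of_nonneg_right hexp hε.le
      rw [div_mul_cancel₀ _ (ne_of_gt hε)] at h''
      linarith
    rw [hhL, mul_div_assoc', div_le_div_iff₀ hP two_pos]
    linarith
  -- 2^L bound
  have hεpow1 : (1:ℝ) ≤ ε ^ (-(1/α)) :=
    Real.one_le_rpow_of_pos_of_le_one_of_nonpos hε hε1.le (by
      have : (0:ℝ) ≤ 1/α := by positivity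
      linarith)
  have hεpow0 : (0:ℝ) < ε ^ (-(1/α)) := Real.rpow_pos_of_pos hε _
  have h2L : (2:ℝ) ^ L ≤ K₀ * ε ^ (-(1/α)) := by
    rcases le_or_gt A 0 with hA | hA
    · have hL0 : L = 0 := by simp [hLdef, Nat.ceil_eq_zero.mpr hA]
      rw [hL0, pow_zero]
      have h1 := mul_le_mul_of_nonneg_right hK₀1 hεpow0.le
      rw [one_mul] at h1
      linarith
    · have hL' : (L:ℝ) < A + 1 := Nat.ceil_lt_add_one hA.le
      have e2A : (2:ℝ) ^ A = (2 * c₁ * T ^ α) ^ (1/α) * ε ^ (-(1/α)) := by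
        have e1 : (2:ℝ) ^ A = Real.exp (Real.log (2 * c₁ * T ^ α / ε) * (1/α)) := by
          rw [Real.rpow_def_of_pos two_pos, hAdef]
          congr 1
          field_simp
        have e2 : (2 * c₁ * T ^ α / ε) ^ (1/α)
            = Real.exp (Real.log (2 * c₁ * T ^ α / ε) * (1/α)) := by
          rw [Real.rpow_def_of_pos hx]
        have e3 : (2 * c₁ * T ^ α / ε) ^ (1/α)
            = (2 * c₁ * T ^ α) ^ (1/α) * ε ^ (-(1/α)) := by
          rw [div_eq_mul_inv, Real.mul_rpow (by positivity) (by positivity),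
            ← Real.rpow_neg_one ε, ← Real.rpow_mul hε.le]
          ring_nf
        rw [e1, ← e2, e3]
      have hcalc : (2:ℝ) ^ L ≤ 2 * (2:ℝ) ^ A := by
        rw [← Real.rpow_natCast 2 L]
        calc (2:ℝ) ^ (L:ℝ) ≤ (2:ℝ) ^ (A + 1) :=
              Real.rpow_le_rpow_of_exponent_le one_le_two hL'.le
          _ = 2 * (2:ℝ) ^ A := by
              rw [Real.rpow_add two_pos, Real.rpow_one]; ring
      rw [e2A] at hcalc
      have hK : 2 * ((2 * c₁ * T ^ α) ^ (1/α) * ε ^ (-(1/α))) ≤ K₀ * ε ^ (-(1/α)) := by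
        have h1 : 2 * (2 * c₁ * T ^ α) ^ (1/α) ≤ K₀ := by simp only [hK₀def]; linarith
        calc 2 * ((2 * c₁ * T ^ α) ^ (1/α) * ε ^ (-(1/α)))
            = (2 * (2 * c₁ * T ^ α) ^ (1/α)) * ε ^ (-(1/α)) := by ring
          _ ≤ K₀ * ε ^ (-(1/α)) := mul_le_mul_of_nonneg_right h1 hεpow0.le
      linarith
  -- telescoping
  have htel : ∀ M : ℕ, ∑ l ∈ range (M + 1), ∫ ω, Y l (N l) ω ∂μ = ∫ ω, Phat M ω ∂μ := by
    intro M
    induction M with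
    | zero => simpa using hbias0 (N 0) (hN1 0)
    | succ M ih =>
      rw [Finset.sum_range_succ, ih, hbias (M + 1) (N (M + 1)) (by omega) (hN1 _),
        integral_sub (hPhatint _) (hPhatint _)]
      simp
  -- MSE bound
  have hXmem : MemLp (∑ l ∈ range (L + 1), fun ω => Y l (N l) ω) 2 μ :=
    memLp_finset_sum' _ (fun i _ => hYL2 _ _)
  have hvarl : ∀ l, variance (Y l (N l)) μ ≤ ε ^ 2 * h l ^ ((β - 1)/2) / (4 * S) := by
    intro l
    refine le_trans (hvar l (N l) (hN1 l)) ?_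
    have hNpos : (0:ℝ) < (N l : ℝ) := by exact_mod_cast hN1 l
    have hhp : (0:ℝ) < h l ^ ((β - 1)/2) := Real.rpow_pos_of_pos (hh l) _
    rw [div_le_div_iff₀ hNpos (by positivity)]
    have hrw : h l ^ ((β - 1)/2) * h l ^ ((β + 1)/2) = h l ^ β := by
      rw [← Real.rpow_add (hh l)]
      congr 1
      ring
    calc c₂ * h l ^ β * (4 * S)
        = ε ^ 2 * h l ^ ((β - 1)/2) * (4 * c₂ * S * h l ^ ((β + 1)/2) / ε ^ 2) := by
          field_simp
          rw [← hrw]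
      _ ≤ ε ^ 2 * h l ^ ((β - 1)/2) * (N l : ℝ) :=
          mul_le_mul_of_nonneg_left (hNge l) (by positivity)
  have hvsum : ∑ l ∈ range (L + 1), variance (Y l (N l)) μ ≤ ε ^ 2 / 4 := by
    calc ∑ l ∈ range (L + 1), variance (Y l (N l)) μ
        ≤ ∑ l ∈ range (L + 1), ε ^ 2 * h l ^ ((β - 1)/2) / (4 * S) :=
          Finset.sum_le_sum (fun l _ => hvarl l)
      _ = ∑ l ∈ range (L + 1), (ε ^ 2 / (4 * S)) * h l ^ ((β - 1)/2) :=
          Finset.sum_congr rfl (fun l _ => by ring)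
      _ = (ε ^ 2 / (4 * S)) * S := by rw [← Finset.mul_sum, hSdef]
      _ = ε ^ 2 / 4 := by field_simp
  have hMSE : ∫ ω, (∑ l ∈ Finset.range (L + 1), Y l (N l) ω - m) ^ 2 ∂μ < ε ^ 2 := by
    have hinteq : ∫ ω, (∑ l ∈ Finset.range (L + 1), Y l (N l) ω - m) ^ 2 ∂μ
        = ∫ ω, ((∑ l ∈ range (L + 1), fun ω' => Y l (N l) ω') ω - m) ^ 2 ∂μ := by
      congr 1
      funext ω
      simp [Finset.sum_apply]
    rw [hinteq, mlmc_msq μ _ hXmem m]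
    have hvs : variance (∑ l ∈ range (L + 1), fun ω => Y l (N l) ω) μ
        = ∑ l ∈ range (L + 1), variance (Y l (N l)) μ := by
      have := IndepFun.variance_sum (μ := μ) (X := fun l => Y l (N l))
        (s := range (L + 1)) (fun i _ => hYL2 _ _)
        (fun i _ j _ hij => (hindep N).indepFun hij)
      convert this using 2
    have hXint : ∫ ω, (∑ l ∈ range (L + 1), fun ω' => Y l (N l) ω') ω ∂μ
        = ∫ ω, Phat L ω ∂μ := by
      simp only [Finset.sum_apply]
      rw [integral_finset_sum _ (fun i _ => (hYL2 i _).integrable one_le_two)]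
      exact htel L
    have hbias2 : ((∫ ω, (∑ l ∈ range (L + 1), fun ω' => Y l (N l) ω') ω ∂μ) - m) ^ 2
        ≤ (ε / 2) ^ 2 := by
      rw [hXint]
      have h1 : |∫ ω, Phat L ω ∂μ - m| ≤ ε / 2 := le_trans (hweak L) hbiasL
      calc (∫ ω, Phat L ω ∂μ - m) ^ 2 = |∫ ω, Phat L ω ∂μ - m| ^ 2 := (sq_abs _).symm
        _ ≤ (ε / 2) ^ 2 := pow_le_pow_left₀ (abs_nonneg _) h1 2
    have hε2 : (0:ℝ) < ε ^ 2 := by positivity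
    rw [hvs]
    have : (ε / 2) ^ 2 = ε ^ 2 / 4 := by ring
    rw [this] at hbias2
    linarith
  -- cost bound
  have hcostl : ∀ l, Cost l (N l) ≤
      4 * c₂ * c₃ * S * h l ^ ((β - 1)/2) * (ε ^ 2)⁻¹ + c₃ * (2:ℝ) ^ l / T := by
    intro l
    refine le_trans (hcost l (N l)) ?_
    have hstep : c₃ * (N l : ℝ) / h l
        ≤ c₃ * (4 * c₂ * S * h l ^ ((β + 1)/2) / ε ^ 2 + 1) / h l := by
      have hhl := (hh l).le
      gcongr <;> first | exact hhl | exact hNle l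
    refine le_trans hstep (le_of_eq ?_)
    have h1h : (h l)⁻¹ = (2:ℝ) ^ l / T := by
      rw [hdef, mul_inv, ← Real.rpow_neg (by norm_num : (0:ℝ) ≤ 2), neg_neg,
        Real.rpow_natCast]
      ring
    have hdiv : h l ^ ((β + 1)/2) * (h l)⁻¹ = h l ^ ((β - 1)/2) := by
      rw [← Real.rpow_neg_one (h l), ← Real.rpow_add (hh l)]
      congr 1
      ring
    rw [div_eq_mul_inv]
    calc c₃ * (4 * c₂ * S * h l ^ ((β + 1)/2) / ε ^ 2 + 1) * (h l)⁻¹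
        = 4 * c₂ * c₃ * S * (h l ^ ((β + 1)/2) * (h l)⁻¹) * (ε ^ 2)⁻¹
          + c₃ * (h l)⁻¹ := by
          rw [div_eq_mul_inv]
          ring
      _ = 4 * c₂ * c₃ * S * h l ^ ((β - 1)/2) * (ε ^ 2)⁻¹ + c₃ * (2:ℝ) ^ l / T := by
          rw [hdiv, h1h]
          ring
  have hcostS : ∑ l ∈ range (L + 1), Cost l (N l) ≤
      4 * c₂ * c₃ * S ^ 2 * (ε ^ 2)⁻¹ + 2 * c₃ / T * (2:ℝ) ^ L := by
    calc ∑ l ∈ range (L + 1), Cost l (N l)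
        ≤ ∑ l ∈ range (L + 1),
            (4 * c₂ * c₃ * S * h l ^ ((β - 1)/2) * (ε ^ 2)⁻¹ + c₃ * (2:ℝ) ^ l / T) :=
          Finset.sum_le_sum (fun l _ => hcostl l)
      _ = ∑ l ∈ range (L + 1), (4 * c₂ * c₃ * S * (ε ^ 2)⁻¹) * h l ^ ((β - 1)/2)
          + ∑ l ∈ range (L + 1), (c₃ / T) * (2:ℝ) ^ l := by
          rw [← Finset.sum_add_distrib]
          exact Finset.sum_congr rfl (fun l _ => by ring)
      _ = (4 * c₂ * c₃ * S * (ε ^ 2)⁻¹) * (∑ l ∈ range (L + 1), h l ^ ((β - 1)/2))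
          + (c₃ / T) * ∑ l ∈ range (L + 1), (2:ℝ) ^ l :=
          congrArg₂ (· + ·) (Finset.mul_sum _ _ _).symm (Finset.mul_sum _ _ _).symm
      _ ≤ (4 * c₂ * c₃ * S * (ε ^ 2)⁻¹) * S + (c₃ / T) * (2 * (2:ℝ) ^ L) := by
          rw [hSdef]
          have hg : ∑ l ∈ range (L + 1), (2:ℝ) ^ l ≤ 2 * (2:ℝ) ^ L := by
            have hgs := geom_sum_mul (2:ℝ) (L + 1)
            have hps : (2:ℝ) ^ (L + 1) = 2 * (2:ℝ) ^ L := by rw [pow_succ]; ring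
            rw [hps] at hgs
            norm_num at hgs
            linarith
          have hpos : (0:ℝ) < 4 * c₂ * c₃ * S * (ε ^ 2)⁻¹ := by positivity
          have := mul_le_mul_of_nonneg_left hg (le_of_lt (by positivity : (0:ℝ) < c₃ / T))
          linarith
      _ = 4 * c₂ * c₃ * S ^ 2 * (ε ^ 2)⁻¹ + 2 * c₃ / T * (2:ℝ) ^ L := by ring
  have hε2 : (0:ℝ) < ε ^ 2 := by positivity
  have hrpow2 : ε ^ (-2:ℝ) = (ε ^ 2)⁻¹ := by
    rw [Real.rpow_neg hε.le, Real.rpow_two]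
  have hXnn : (0:ℝ) ≤ (ε ^ 2)⁻¹ := by positivity
  have hεineq : ε ^ (-(1/α)) ≤ (ε ^ 2)⁻¹ := by
    rw [← hrpow2]
    apply Real.rpow_le_rpow_of_exponent_ge hε hε1.le
    have h1 : 1/α ≤ 2 := by rw [div_le_iff₀ hα0]; linarith
    linarith
  have hK₀ε : (2:ℝ) ^ L ≤ K₀ * (ε ^ 2)⁻¹ := by
    refine le_trans h2L ?_
    exact mul_le_mul_of_nonneg_left hεineq hK₀0.le
  have hSq : S = T ^ ((β - 1)/2) * ∑ l ∈ range (L + 1), q ^ l := by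
    rw [hSdef, Finset.mul_sum]
    refine Finset.sum_congr rfl (fun l _ => ?_)
    rw [hdef, mlmc_rpow_split _ _ hT.le]
    rw [hqdef]
    ring
  have hqsum0 : (0:ℝ) ≤ ∑ l ∈ range (L + 1), q ^ l :=
    Finset.sum_nonneg (fun l _ => pow_nonneg hq0.le l)
  have hTt : (0:ℝ) < T ^ ((β - 1)/2) := Real.rpow_pos_of_pos hT _
  refine ⟨L, N, fun l _ => hN1 l, hMSE, ?_⟩
  rcases lt_trichotomy 1 β with hb | hb | hb
  · -- β > 1
    rw [if_pos hb, hrpow2]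
    have hq1 : q < 1 := by
      rw [hqdef]
      exact Real.rpow_lt_one_of_one_lt_of_neg one_lt_two (by linarith)
    have hSle : S ≤ Sgt := by
      rw [hSq, hSgtdef]
      calc T ^ ((β - 1)/2) * ∑ l ∈ range (L + 1), q ^ l
          ≤ T ^ ((β - 1)/2) * (1/(1 - q)) :=
            mul_le_mul_of_nonneg_left (mlmc_geom hq0.le hq1 (L + 1)) hTt.le
        _ = T ^ ((β - 1)/2) / (1 - q) := by ring
    have hS2 : S ^ 2 ≤ Sgt ^ 2 := pow_le_pow_left₀ hS0.le hSle 2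
    have hCle : Cgt ≤ c₄ := by
      have g1 : Cgt ≤ 1 ⊔ Cgt := le_max_right _ _
      have g2 : (1:ℝ) ≤ 1 ⊔ Ceq := le_max_left _ _
      have g3 : (1:ℝ) ≤ 1 ⊔ Clt := le_max_left _ _
      simp only [hc₄def]; linarith
    calc ∑ l ∈ range (L + 1), Cost l (N l)
        ≤ 4 * c₂ * c₃ * S ^ 2 * (ε ^ 2)⁻¹ + 2 * c₃ / T * (2:ℝ) ^ L := hcostS
      _ ≤ 4 * c₂ * c₃ * Sgt ^ 2 * (ε ^ 2)⁻¹ + 2 * c₃ / T * (K₀ * (ε ^ 2)⁻¹) := by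
          have t1 := mul_le_mul_of_nonneg_right
            (mul_le_mul_of_nonneg_left hS2 (by positivity : (0:ℝ) ≤ 4 * c₂ * c₃)) hXnn
          have t2 := mul_le_mul_of_nonneg_left hK₀ε
            (by positivity : (0:ℝ) ≤ 2 * c₃ / T)
          linarith
      _ = Cgt * (ε ^ 2)⁻¹ := by rw [hCgtdef]; ring
      _ ≤ c₄ * (ε ^ 2)⁻¹ := mul_le_mul_of_nonneg_right hCle hXnn
  · -- β = 1
    rw [if_neg (by rw [← hb]; exact lt_irrefl 1), if_pos hb.symm, hrpow2]
    have ht0 : (β - 1)/2 = 0 := by rw [← hb]; norm_num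
    have hSL : S = (L:ℝ) + 1 := by
      rw [hSdef]
      simp [ht0, Real.rpow_zero]
    have hnl : (1:ℝ) ≤ -Real.log ε := by linarith
    have hd : (0:ℝ) < α * Real.log 2 := mul_pos hα0 hlog2
    have hBA : A = (B - Real.log ε) / (α * Real.log 2) := by
      rw [hAdef, Real.log_div (by positivity) (ne_of_gt hε), hBdef]
    have hLA : (L:ℝ) ≤ max A 0 + 1 := by
      rcases le_or_gt A 0 with h' | h'
      · have hL0 : L = 0 := by simp [hLdef, Nat.ceil_eq_zero.mpr h']
        rw [hL0, Nat.cast_zero]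
        have := le_max_right A (0:ℝ)
        linarith
      · have h2 := Nat.ceil_lt_add_one h'.le
        have := le_max_left A (0:ℝ)
        rw [hLdef]
        linarith
    have hM0 : (0:ℝ) ≤ max B 0 := le_max_right B 0
    have hAle : max A 0 ≤ (max B 0 + (-Real.log ε)) / (α * Real.log 2) := by
      apply max_le
      · rw [hBA]
        refine (div_le_div_iff_of_pos_right hd).mpr ?_
        have := le_max_left B (0:ℝ)
        linarith
      · apply div_nonneg _ hd.le
        linarith
    have hSK : S ≤ K₁ * (-Real.log ε) := by
      have e1 : max B 0 + (-Real.log ε) ≤ (max B 0 + 1) * (-Real.log ε) := by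
        have h1 := mul_le_mul_of_nonneg_left hnl hM0
        have h2 : (max B 0 + 1) * (-Real.log ε)
            = max B 0 * (-Real.log ε) + (-Real.log ε) := by ring
        rw [mul_one] at h1
        linarith
      have e2 : (max B 0 + (-Real.log ε)) / (α * Real.log 2)
          ≤ ((max B 0 + 1) * (-Real.log ε)) / (α * Real.log 2) :=
        (div_le_div_iff_of_pos_right hd).mpr e1
      have e3 : (2:ℝ) ≤ 2 * (-Real.log ε) := by linarith
      rw [hSL, hK₁def]
      have : ((max B 0 + 1) / (α * Real.log 2) + 2) * (-Real.log ε)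
          = ((max B 0 + 1) * (-Real.log ε)) / (α * Real.log 2) + 2 * (-Real.log ε) := by
        ring
      rw [this]
      linarith
    have hS2 : S ^ 2 ≤ K₁ ^ 2 * Real.log ε ^ 2 := by
      calc S ^ 2 ≤ (K₁ * (-Real.log ε)) ^ 2 := pow_le_pow_left₀ hS0.le hSK 2
        _ = K₁ ^ 2 * Real.log ε ^ 2 := by ring
    have hlog1 : (1:ℝ) ≤ Real.log ε ^ 2 := by
      have e : (Real.log ε + 1) ^ 2 = Real.log ε ^ 2 + 2 * Real.log ε + 1 := by ring
      have := sq_nonneg (Real.log ε + 1)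
      linarith
    have hCle : Ceq ≤ c₄ := by
      have g1 : Ceq ≤ 1 ⊔ Ceq := le_max_right _ _
      have g2 : (1:ℝ) ≤ 1 ⊔ Cgt := le_max_left _ _
      have g3 : (1:ℝ) ≤ 1 ⊔ Clt := le_max_left _ _
      simp only [hc₄def]; linarith
    calc ∑ l ∈ range (L + 1), Cost l (N l)
        ≤ 4 * c₂ * c₃ * S ^ 2 * (ε ^ 2)⁻¹ + 2 * c₃ / T * (2:ℝ) ^ L := hcostS
      _ ≤ 4 * c₂ * c₃ * (K₁ ^ 2 * Real.log ε ^ 2) * (ε ^ 2)⁻¹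
          + 2 * c₃ / T * (K₀ * (ε ^ 2)⁻¹) := by
          have t1 := mul_le_mul_of_nonneg_right
            (mul_le_mul_of_nonneg_left hS2 (by positivity : (0:ℝ) ≤ 4 * c₂ * c₃)) hXnn
          have t2 := mul_le_mul_of_nonneg_left hK₀ε
            (by positivity : (0:ℝ) ≤ 2 * c₃ / T)
          linarith
      _ ≤ 4 * c₂ * c₃ * (K₁ ^ 2 * Real.log ε ^ 2) * (ε ^ 2)⁻¹
          + (2 * c₃ * K₀ / T * (ε ^ 2)⁻¹) * Real.log ε ^ 2 := by
          have hpos : (0:ℝ) ≤ 2 * c₃ * K₀ / T * (ε ^ 2)⁻¹ := by positivity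
          have := le_mul_of_one_le_right hpos hlog1
          have e : 2 * c₃ / T * (K₀ * (ε ^ 2)⁻¹) = 2 * c₃ * K₀ / T * (ε ^ 2)⁻¹ := by ring
          linarith [e ▸ this]
      _ = Ceq * (ε ^ 2)⁻¹ * Real.log ε ^ 2 := by rw [hCeqdef]; ring
      _ ≤ c₄ * (ε ^ 2)⁻¹ * Real.log ε ^ 2 := by
          have := mul_le_mul_of_nonneg_right
            (mul_le_mul_of_nonneg_right hCle hXnn) (sq_nonneg (Real.log ε))
          simpa using this
  · -- β < 1
    rw [if_neg (by linarith), if_neg (by intro h'; rw [h'] at hb; exact lt_irrefl 1 hb)]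
    have hq1 : 1 < q := by
      rw [hqdef]
      rw [show -((β - 1)/2) = (1 - β)/2 by ring]
      exact Real.one_lt_rpow_iff_of_pos two_pos |>.mpr (Or.inl ⟨one_lt_two, by linarith⟩)
    have hγ0 : (0:ℝ) ≤ (1 - β)/2 := by linarith
    -- q ^ L = (2 ^ L) ^ ((1 - β)/2)
    have hqL : q ^ L = ((2:ℝ) ^ L) ^ ((1 - β)/2) := by
      rw [hqdef, show -((β - 1)/2) = (1 - β)/2 by ring,
        ← Real.rpow_natCast ((2:ℝ) ^ ((1 - β)/2)) L,
        ← Real.rpow_natCast (2:ℝ) L,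
        ← Real.rpow_mul (by norm_num : (0:ℝ) ≤ 2),
        ← Real.rpow_mul (by norm_num : (0:ℝ) ≤ 2)]
      ring_nf
    have hqLle : q ^ L ≤ K₀ ^ ((1 - β)/2) * (ε ^ (-(1/α))) ^ ((1 - β)/2) := by
      rw [hqL, ← Real.mul_rpow hK₀0.le (Real.rpow_nonneg hε.le _)]
      exact Real.rpow_le_rpow (by positivity) h2L hγ0
    have hsumq : ∑ l ∈ range (L + 1), q ^ l ≤ q * q ^ L / (q - 1) := by
      rw [le_div_iff₀ (by linarith)]
      have hgs := geom_sum_mul q (L + 1)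
      have hps : q ^ (L + 1) = q * q ^ L := by rw [pow_succ]; ring
      rw [hps] at hgs
      linarith [mul_nonneg hq0.le (pow_nonneg hq0.le L)]
    have hεγ : (ε ^ (-(1/α))) ^ ((1 - β)/2) = ε ^ (-(1/α) * ((1 - β)/2)) :=
      (Real.rpow_mul hε.le _ _).symm
    have hSle : S ≤ Slt * ε ^ (-(1/α) * ((1 - β)/2)) := by
      rw [hSq, hSltdef]
      calc T ^ ((β - 1)/2) * ∑ l ∈ range (L + 1), q ^ l
          ≤ T ^ ((β - 1)/2) * (q * q ^ L / (q - 1)) :=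
            mul_le_mul_of_nonneg_left hsumq hTt.le
        _ ≤ T ^ ((β - 1)/2) * (q * (K₀ ^ ((1 - β)/2) * ε ^ (-(1/α) * ((1 - β)/2))) / (q - 1)) := by
            have h1 : q * q ^ L / (q - 1)
                ≤ q * (K₀ ^ ((1 - β)/2) * ε ^ (-(1/α) * ((1 - β)/2))) / (q - 1) := by
              apply (div_le_div_iff_of_pos_right (by linarith : (0:ℝ) < q - 1)).mpr
              apply mul_le_mul_of_nonneg_left _ hq0.le
              rw [← hεγ]
              exact hqLle
            exact mul_le_mul_of_nonneg_left h1 hTt.le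
        _ = T ^ ((β - 1)/2) * (q * K₀ ^ ((1 - β)/2) / (q - 1))
            * ε ^ (-(1/α) * ((1 - β)/2)) := by ring
    have hSlt0 : 0 < Slt * ε ^ (-(1/α) * ((1 - β)/2)) := lt_of_lt_of_le hS0 hSle
    have hSlt0' : 0 < Slt := by
      have hp : (0:ℝ) < ε ^ (-(1/α) * ((1 - β)/2)) := Real.rpow_pos_of_pos hε _
      have hdp := div_pos hSlt0 hp
      rwa [mul_div_cancel_right₀ _ (ne_of_gt hp)] at hdp
    have hS2 : S ^ 2 ≤ Slt ^ 2 * ε ^ (-(1 - β)/α) := by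
      have := pow_le_pow_left₀ hS0.le hSle 2
      refine le_trans this (le_of_eq ?_)
      rw [mul_pow, ← Real.rpow_natCast (ε ^ (-(1/α) * ((1 - β)/2))) 2,
        ← Real.rpow_mul hε.le]
      congr 1
      push_cast
      ring
    have hεfin : ε ^ (-(1 - β)/α) * (ε ^ 2)⁻¹ = ε ^ (-2 - (1 - β)/α) := by
      rw [← hrpow2, ← Real.rpow_add hε]
      congr 1
      ring
    have hεfin0 : (0:ℝ) < ε ^ (-2 - (1 - β)/α) := Real.rpow_pos_of_pos hε _
    have hεle : (ε ^ 2)⁻¹ ≤ ε ^ (-2 - (1 - β)/α) := by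
      rw [← hrpow2]
      apply Real.rpow_le_rpow_of_exponent_ge hε hε1.le
      have : (0:ℝ) ≤ (1 - β)/α := by
        apply div_nonneg _ hα0.le
        linarith
      linarith
    have hCle : Clt ≤ c₄ := by
      have g1 : Clt ≤ 1 ⊔ Clt := le_max_right _ _
      have g2 : (1:ℝ) ≤ 1 ⊔ Cgt := le_max_left _ _
      have g3 : (1:ℝ) ≤ 1 ⊔ Ceq := le_max_left _ _
      simp only [hc₄def]; linarith
    calc ∑ l ∈ range (L + 1), Cost l (N l)
        ≤ 4 * c₂ * c₃ * S ^ 2 * (ε ^ 2)⁻¹ + 2 * c₃ / T * (2:ℝ) ^ L := hcostS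
      _ ≤ 4 * c₂ * c₃ * (Slt ^ 2 * ε ^ (-(1 - β)/α)) * (ε ^ 2)⁻¹
          + 2 * c₃ / T * (K₀ * (ε ^ 2)⁻¹) := by
          have t1 := mul_le_mul_of_nonneg_right
            (mul_le_mul_of_nonneg_left hS2 (by positivity : (0:ℝ) ≤ 4 * c₂ * c₃)) hXnn
          have t2 := mul_le_mul_of_nonneg_left hK₀ε
            (by positivity : (0:ℝ) ≤ 2 * c₃ / T)
          linarith
      _ = 4 * c₂ * c₃ * Slt ^ 2 * (ε ^ (-(1 - β)/α) * (ε ^ 2)⁻¹)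
          + 2 * c₃ * K₀ / T * (ε ^ 2)⁻¹ := by ring
      _ ≤ 4 * c₂ * c₃ * Slt ^ 2 * ε ^ (-2 - (1 - β)/α)
          + 2 * c₃ * K₀ / T * ε ^ (-2 - (1 - β)/α) := by
          rw [hεfin]
          have := mul_le_mul_of_nonneg_left hεle (by positivity : (0:ℝ) ≤ 2 * c₃ * K₀ / T)
          linarith
      _ = Clt * ε ^ (-2 - (1 - β)/α) := by rw [hCltdef]; ring
      _ ≤ c₄ * ε ^ (-2 - (1 - β)/α) := mul_le_mul_of_nonneg_right hCle hεfin0.le
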